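/- arXiv:1806.07549 — 3 statements merged into one kernel-verified Lean document; each statement's English description precedes it below -/
import Mathlib

section
/- There exist absolute constants c > 0 and C > 0 such that for every complex number z = β + iτ with β ≥ 1 and τ ∈ ℝ, |∫₀¹ φ_z(u) du| ≥ c·(1 + |τ|)^{−C}. -/
open MeasureTheory

/-- `e(t) = exp(2πit)`. -/
noncomputable def ec (t : ℝ) : ℂ := Complex.exp (2 * Real.pi * Complex.I * t)

/-- `φ_z(t) = |1 - e(t)|^z = exp(z log|1 - e(t)|)` for `t` with `1 - e(t) ≠ 0`,
and `φ_z(t) = 0` otherwise (in particular `φ_z(0) = 0`). -/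
noncomputable def phi (z : ℂ) (t : ℝ) : ℂ :=
  if 1 - ec t = 0 then 0 else Complex.exp (z * Real.log ‖1 - ec t‖)


open Real

lemma sin_pi_pos {u : ℝ} (hu : u ∈ Set.Ioo (0:ℝ) 1) : 0 < Real.sin (π * u) :=
  Real.sin_pos_of_pos_of_lt_pi (by have := hu.1; positivity)
    (by nlinarith [hu.2, Real.pi_pos])

lemma abs_one_sub_ec {u : ℝ} (hu : u ∈ Set.Ioo (0:ℝ) 1) :
    ‖1 - ec u‖ = 2 * Real.sin (π * u) := by
  have hs : 0 < Real.sin (π * u) := sin_pi_pos hu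
  have hec : 1 - ec u = Complex.ofReal (1 - Real.cos (2*π*u)) +
      Complex.ofReal (-(Real.sin (2*π*u))) * Complex.I := by
    unfold ec
    rw [show (2 * ↑Real.pi * Complex.I * ↑u : ℂ) = ((2*π*u : ℝ) : ℂ) * Complex.I by
      push_cast; ring]
    rw [Complex.exp_mul_I, ← Complex.ofReal_cos, ← Complex.ofReal_sin]
    push_cast; ring
  rw [hec, Complex.norm_add_mul_I]
  rw [show (2 * Real.sin (π * u)) = Real.sqrt ((2 * Real.sin (π * u))^2) by
    rw [Real.sqrt_sq (by positivity)]]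
  congr 1
  have hc := Real.cos_two_mul (π * u)
  have hsq := Real.sin_sq_add_cos_sq (π * u)
  have h2 : 2*π*u = 2*(π*u) := by ring
  rw [h2]
  nlinarith [Real.sin_sq_add_cos_sq (2*(π*u))]

lemma phi_eq {w : ℂ} {u : ℝ} (hu : u ∈ Set.Ioo (0:ℝ) 1) :
    phi w u = Complex.exp (w * Real.log (2 * Real.sin (π * u))) := by
  have hs : 0 < Real.sin (π * u) := sin_pi_pos hu
  have hne : 1 - ec u ≠ 0 := by
    intro h
    have := abs_one_sub_ec hu
    rw [h] at this
    simp at this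
    nlinarith
  rw [phi, if_neg hne, abs_one_sub_ec hu]

lemma beta_eq (w : ℂ) :
    Complex.betaIntegral ((w+1)/2) ((w+1)/2) =
      ↑π * Complex.exp (-2 * w * Real.log 2) * ∫ u in (0:ℝ)..1, phi w u := by
  classical
  set f : ℝ → ℝ := fun u => (1 - Real.cos (π * u)) / 2 with hf
  set F : ℝ → ℝ := fun u => π * Real.sin (π * u) / 2 with hF
  set g : ℝ → ℂ := fun x => (x:ℂ) ^ ((w+1)/2 - 1) * (1 - (x:ℂ)) ^ ((w+1)/2 - 1) with hg
  have hcos_lt : ∀ u ∈ Set.Ioo (0:ℝ) 1, -1 < Real.cos (π*u) ∧ Real.cos (π*u) < 1 := by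
    intro u hu
    constructor
    · have := Real.cos_lt_cos_of_nonneg_of_le_pi (x := π*u) (y := π)
        (by have := hu.1; positivity) (le_refl π) (by nlinarith [hu.2, Real.pi_pos])
      rw [Real.cos_pi] at this; exact this
    · have := Real.cos_lt_cos_of_nonneg_of_le_pi (x := 0) (y := π*u) (le_refl 0)
        (by nlinarith [hu.2, Real.pi_pos]) (by have := hu.1; positivity)
      rw [Real.cos_zero] at this; exact this
  have himg : f '' Set.Ioo 0 1 = Set.Ioo 0 1 := by
    apply Set.eq_of_subset_of_subset
    · rintro x ⟨u, hu, rfl⟩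
      obtain ⟨h1, h2⟩ := hcos_lt u hu
      exact ⟨by simp only [hf]; linarith, by simp only [hf]; linarith⟩
    · intro x hx
      have hy1 : (-1:ℝ) < 1 - 2*x := by have := hx.2; linarith
      have hy2 : 1 - 2*x < 1 := by have := hx.1; linarith
      refine ⟨Real.arccos (1 - 2*x) / π, ⟨?_, ?_⟩, ?_⟩
      · exact div_pos (Real.arccos_pos.mpr hy2) Real.pi_pos
      · rw [div_lt_one Real.pi_pos]
        refine lt_of_le_of_ne (Real.arccos_le_pi _) (fun h => ?_)
        have := Real.cos_arccos hy1.le hy2.le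
        rw [h, Real.cos_pi] at this
        linarith
      · simp only [hf]
        rw [mul_div_cancel₀ _ (ne_of_gt Real.pi_pos)]
        rw [Real.cos_arccos hy1.le hy2.le]
        ring
  have hderiv : ∀ u ∈ Set.Ioo (0:ℝ) 1, HasDerivWithinAt f (F u) (Set.Ioo 0 1) u := by
    intro u _
    have h1 : HasDerivAt (fun v:ℝ => π * v) π u := by
      simpa using (hasDerivAt_id u).const_mul π
    have h2 : HasDerivAt (fun v:ℝ => Real.cos (π*v)) (-Real.sin (π*u) * π) u := by
      have := (Real.hasDerivAt_cos (π*u)).comp u h1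
      simp only [neg_mul] at this ⊢
      exact this
    have h3 : HasDerivAt f (F u) u := by
      have := ((hasDerivAt_const u (1:ℝ)).sub h2).div_const 2
      simp only [hf, hF]
      exact this.congr_deriv (by ring)
    exact h3.hasDerivWithinAt
  have hinj : Set.InjOn f (Set.Ioo 0 1) := by
    have hmono : StrictMonoOn f (Set.Ioo (0:ℝ) 1) := by
      intro a ha b hb hab
      have : Real.cos (π*b) < Real.cos (π*a) :=
        Real.cos_lt_cos_of_nonneg_of_le_pi (by have := ha.1; positivity)
          (by nlinarith [hb.2, Real.pi_pos]) (by nlinarith [Real.pi_pos])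
      simp only [hf]; linarith
    exact hmono.injOn
  have key := integral_image_eq_integral_abs_deriv_smul measurableSet_Ioo hderiv hinj g
  rw [himg] at key
  rw [Complex.betaIntegral, intervalIntegral.integral_of_le zero_le_one,
    integral_Ioc_eq_integral_Ioo]
  rw [show (∫ x in Set.Ioo (0:ℝ) 1, (x:ℂ) ^ ((w+1)/2 - 1) * (1 - (x:ℂ)) ^ ((w+1)/2 - 1))
      = ∫ x in Set.Ioo (0:ℝ) 1, g x from rfl, key]
  rw [intervalIntegral.integral_of_le zero_le_one, integral_Ioc_eq_integral_Ioo,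
    ← MeasureTheory.integral_const_mul]
  apply MeasureTheory.setIntegral_congr_fun measurableSet_Ioo
  intro u hu
  obtain ⟨hc1, hc2⟩ := hcos_lt u hu
  have hs : 0 < Real.sin (π * u) := sin_pi_pos hu
  set s := Real.sin (π * u) with hsdef
  have hx0 : 0 < f u := by simp only [hf]; linarith
  have hx1 : f u < 1 := by simp only [hf]; linarith
  have h1x0 : 0 < 1 - f u := by linarith
  have habs : |F u| = π * s / 2 := by
    rw [abs_of_nonneg]; positivity
  have hgf : g (f u) = Complex.exp ((w - 1) * (↑(Real.log s) - ↑(Real.log 2))) := by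
    have hxne : ((f u : ℝ) : ℂ) ≠ 0 := by
      exact_mod_cast ne_of_gt hx0
    have h1xne : (1 - ((f u : ℝ) : ℂ)) ≠ 0 := by
      rw [show (1 - ((f u : ℝ) : ℂ)) = ((1 - f u : ℝ) : ℂ) by push_cast; ring]
      exact_mod_cast ne_of_gt h1x0
    simp only [hg]
    rw [Complex.cpow_def_of_ne_zero hxne, Complex.cpow_def_of_ne_zero h1xne]
    rw [show (1 - ((f u : ℝ) : ℂ)) = ((1 - f u : ℝ) : ℂ) by push_cast; ring]
    rw [← Complex.ofReal_log hx0.le, ← Complex.ofReal_log h1x0.le, ← Complex.exp_add]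
    congr 1
    have hmul : f u * (1 - f u) = (s/2)^2 := by
      have := Real.sin_sq_add_cos_sq (π * u)
      simp only [hf]
      field_simp
      nlinarith
    have hlog : Real.log (f u) + Real.log (1 - f u) = 2 * (Real.log s - Real.log 2) := by
      rw [← Real.log_mul (ne_of_gt hx0) (ne_of_gt h1x0), hmul, ← Real.log_div (ne_of_gt hs) two_ne_zero]
      rw [show ((s/2)^2 : ℝ) = (s/2)^(2:ℕ) from rfl, Real.log_pow]
      push_cast; ring
    have hlogC : ((Real.log (f u) : ℂ)) + ((Real.log (1 - f u) : ℂ))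
        = 2 * ((Real.log s : ℂ) - (Real.log 2 : ℂ)) := by
      exact_mod_cast hlog
    linear_combination ((w+1)/2 - 1) * hlogC
  have hphi : phi w u = Complex.exp (w * (↑(Real.log 2) + ↑(Real.log s))) := by
    rw [phi_eq hu, ← hsdef, Real.log_mul two_ne_zero (ne_of_gt hs)]
    push_cast; ring_nf
  show |F u| • g (f u) = ↑π * Complex.exp (-2 * w * ↑(Real.log 2)) * phi w u
  rw [habs, hgf, hphi]
  have expand : (w - 1) * ((Real.log s : ℂ) - (Real.log 2 : ℂ))
      = (-2 * w * (Real.log 2 : ℂ) + w * ((Real.log 2 : ℂ) + (Real.log s : ℂ)))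
        + ((Real.log 2 : ℂ) - (Real.log s : ℂ)) := by ring
  rw [Complex.real_smul, expand, Complex.exp_add, Complex.exp_add]
  have e2 : Complex.exp ((↑(Real.log 2) : ℂ) - ↑(Real.log s)) = ((2/s : ℝ) : ℂ) := by
    rw [← Complex.ofReal_sub, ← Complex.ofReal_exp, Real.exp_sub, Real.exp_log two_pos,
      Real.exp_log hs]
  rw [e2]
  have e3 : ((π * s / 2 : ℝ) : ℂ) * ((2/s : ℝ) : ℂ) = (π : ℂ) := by
    rw [← Complex.ofReal_mul]
    congr 1
    field_simp
  calc ((π * s / 2 : ℝ) : ℂ) * (Complex.exp (-2 * w * ↑(Real.log 2)) *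
          Complex.exp (w * (↑(Real.log 2) + ↑(Real.log s))) * ((2/s : ℝ) : ℂ))
      = (((π * s / 2 : ℝ) : ℂ) * ((2/s : ℝ) : ℂ)) * (Complex.exp (-2 * w * ↑(Real.log 2)) *
          Complex.exp (w * (↑(Real.log 2) + ↑(Real.log s)))) := by ring
    _ = ↑π * Complex.exp (-2 * w * ↑(Real.log 2)) *
          Complex.exp (w * (↑(Real.log 2) + ↑(Real.log s))) := by rw [e3]; ring

lemma beta_bound {w : ℂ} (hw : 1 ≤ w.re) :
    ‖Complex.betaIntegral (w/2+1) (w/2+1)‖ ≤ ((2:ℝ) ^ w.re)⁻¹ := by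
  have hb : ∀ x ∈ Set.uIoc (0:ℝ) 1,
      ‖(x:ℂ) ^ (w/2+1-1) * (1 - (x:ℂ)) ^ (w/2+1-1)‖ ≤ ((2:ℝ) ^ w.re)⁻¹ := by
    intro x hx
    rw [Set.uIoc_of_le zero_le_one] at hx
    have hx0 : 0 < x := hx.1
    have hx1 : x ≤ 1 := hx.2
    have hrw : (w/2+1-1) = w/2 := by ring
    rw [hrw]
    have hre2 : (w/2).re = w.re/2 := by
      simp [Complex.div_re, Complex.normSq]
    rcases eq_or_lt_of_le hx1 with h1 | h1
    · -- x = 1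
      rw [norm_mul]
      have : (1 - (x:ℂ)) = 0 := by rw [h1]; push_cast; ring
      rw [this, Complex.zero_cpow (by
        intro h
        have := congrArg Complex.re h
        rw [hre2] at this
        simp at this
        linarith)]
      simp
      positivity
    · have h1x : 0 < 1 - x := by linarith
      rw [norm_mul,
        Complex.norm_cpow_eq_rpow_re_of_pos hx0,
        show (1 - (x:ℂ)) = ((1-x:ℝ):ℂ) by push_cast; ring,
        Complex.norm_cpow_eq_rpow_re_of_pos h1x, hre2]
      rw [← Real.mul_rpow hx0.le h1x.le]
      have hle : x * (1-x) ≤ 1/4 := by nlinarith [sq_nonneg (x - 1/2)]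
      have h24 : ((1:ℝ)/4) ^ (w.re/2) = ((2:ℝ)^w.re)⁻¹ := by
        rw [one_div, Real.inv_rpow (by norm_num : (0:ℝ) ≤ 4),
          show (4:ℝ) = (2:ℝ)^(2:ℕ) by norm_num, ← Real.rpow_natCast (2:ℝ) 2,
          ← Real.rpow_mul (by norm_num : (0:ℝ) ≤ 2)]
        congr 2
        push_cast
        ring
      rw [← h24]
      exact Real.rpow_le_rpow (by positivity) hle (by linarith)
  have := intervalIntegral.norm_integral_le_of_norm_le_const hb
  simpa [Complex.betaIntegral] using this

lemma re_div_two (v : ℂ) : (v/2).re = v.re/2 := by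
  simp [Complex.div_re, Complex.normSq]

lemma key_identity {z : ℂ} (hz : 1 ≤ z.re) :
    (z+1) * (∫ u in (0:ℝ)..1, phi z u) * Complex.betaIntegral (z/2+1) (z/2+1) = 1 := by
  have ha : 0 < ((z+1)/2).re := by
    rw [re_div_two]; simp [Complex.add_re]; linarith
  have ha' : 0 < (z/2+1).re := by
    simp only [Complex.add_re, Complex.one_re, re_div_two]; linarith
  have hG : Complex.Gamma (z+1) ≠ 0 := by
    apply Complex.Gamma_ne_zero_of_re_pos
    simp [Complex.add_re]; linarith
  have hz1ne : (z+1) ≠ 0 := by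
    intro h
    have := congrArg Complex.re h
    simp [Complex.add_re] at this
    linarith
  have eq1 := Complex.Gamma_mul_Gamma_eq_betaIntegral ha ha
  rw [show (z+1)/2 + (z+1)/2 = z+1 by ring] at eq1
  have eq2 := Complex.Gamma_mul_Gamma_eq_betaIntegral ha' ha'
  rw [show (z/2+1) + (z/2+1) = z+2 by ring] at eq2
  rw [show (z+2 : ℂ) = (z+1)+1 by ring, Complex.Gamma_add_one _ hz1ne] at eq2
  have eqd := Complex.Gamma_mul_Gamma_add_half ((z+1)/2)
  rw [show (z+1)/2 + 1/2 = z/2+1 by ring, show 2*((z+1)/2) = z+1 by ring,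
    show 1 - (z+1) = -z by ring] at eqd
  have hT : ((2:ℂ) ^ (-z : ℂ)) = Complex.exp (-z * (Real.log 2 : ℂ)) := by
    rw [Complex.cpow_def_of_ne_zero (by norm_num : (2:ℂ) ≠ 0),
      show ((2:ℂ)) = (((2:ℝ)):ℂ) by norm_num,
      ← Complex.ofReal_log (by norm_num : (0:ℝ) ≤ 2), mul_comm]
  rw [hT] at eqd
  -- square of duplication
  have sq : (Complex.Gamma ((z+1)/2) * Complex.Gamma (z/2+1))^2
      = (Complex.Gamma (z+1))^2 * Complex.exp (-2*z*(Real.log 2 : ℂ)) * (π : ℂ) := by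
    rw [eqd]
    rw [show (Complex.Gamma (z+1) * Complex.exp (-z * (Real.log 2 : ℂ)) * (↑(Real.sqrt π)))^2
      = (Complex.Gamma (z+1))^2 * (Complex.exp (-z * (Real.log 2 : ℂ)) *
        Complex.exp (-z * (Real.log 2 : ℂ))) * ((↑(Real.sqrt π)) * (↑(Real.sqrt π))) by ring]
    rw [← Complex.exp_add, ← Complex.ofReal_mul, Real.mul_self_sqrt Real.pi_pos.le]
    ring_nf
  have expand : (Complex.Gamma ((z+1)/2) * Complex.Gamma (z/2+1))^2
      = (Complex.Gamma (z+1))^2 * ((z+1) * Complex.betaIntegral ((z+1)/2) ((z+1)/2)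
          * Complex.betaIntegral (z/2+1) (z/2+1)) := by
    rw [show (Complex.Gamma ((z+1)/2) * Complex.Gamma (z/2+1))^2
      = (Complex.Gamma ((z+1)/2) * Complex.Gamma ((z+1)/2))
        * (Complex.Gamma (z/2+1) * Complex.Gamma (z/2+1)) by ring, eq1, eq2]
    ring
  have hGsq : (Complex.Gamma (z+1))^2 ≠ 0 := pow_ne_zero _ hG
  have hmain : (z+1) * Complex.betaIntegral ((z+1)/2) ((z+1)/2)
      * Complex.betaIntegral (z/2+1) (z/2+1)
      = Complex.exp (-2*z*(Real.log 2 : ℂ)) * (π : ℂ) := by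
    apply mul_left_cancel₀ hGsq
    rw [← expand, sq]
    ring
  rw [beta_eq z] at hmain
  have hpiE : ((π : ℂ) * Complex.exp (-2*z*(Real.log 2 : ℂ))) ≠ 0 :=
    mul_ne_zero (Complex.ofReal_ne_zero.mpr Real.pi_ne_zero) (Complex.exp_ne_zero _)
  apply mul_left_cancel₀ hpiE
  rw [mul_one]
  linear_combination hmain


/-- for `z = β + iτ` with `β ≥ 1`,
`|∫₀¹ φ_z(u) du| ≫ (1 + |τ|)^{-O(1)}`. -/
theorem phi_integral_lower_bound :
    ∃ c C : ℝ, 0 < c ∧ 0 < C ∧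
      ∀ z : ℂ, 1 ≤ z.re →
        c * (1 + |z.im|) ^ (-C) ≤ ‖∫ u in (0:ℝ)..1, phi z u‖ := by
  refine ⟨1, 1, one_pos, one_pos, fun z hz => ?_⟩
  set I := ∫ u in (0:ℝ)..1, phi z u with hI
  set B := Complex.betaIntegral (z/2+1) (z/2+1) with hB
  have key := key_identity hz
  have h1 : ‖z+1‖ * ‖I‖ * ‖B‖ = 1 := by
    have := congrArg norm key
    simpa [norm_mul] using this
  have hpos : (0:ℝ) < 1 + |z.im| := by positivity
  have hBle : ‖B‖ ≤ ((2:ℝ) ^ z.re)⁻¹ := beta_bound hz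
  have habs1 : ‖z+1‖ ≤ (z.re+1) * (1+|z.im|) := by
    have h := Complex.norm_le_abs_re_add_abs_im (z+1)
    have h2 : |(z+1).re| = z.re + 1 := by
      simp only [Complex.add_re, Complex.one_re]
      rw [abs_of_nonneg (by linarith)]
    have h3 : (z+1).im = z.im := by simp
    rw [h2, h3] at h
    nlinarith [abs_nonneg z.im]
  have hP : z.re + 1 ≤ (2:ℝ) ^ z.re := by
    have := one_add_mul_self_le_rpow_one_add (by norm_num : (-1:ℝ) ≤ 1) hz
    norm_num at this
    linarith
  have hPpos : (0:ℝ) < (2:ℝ) ^ z.re := Real.rpow_pos_of_pos two_pos _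
  have hstep : (1:ℝ) ≤ (1 + |z.im|) * ‖I‖ := by
    have c1 : ‖z+1‖ * ‖I‖ * ‖B‖
        ≤ ((z.re+1) * (1+|z.im|)) * ‖I‖ * (((2:ℝ) ^ z.re)⁻¹) := by
      apply mul_le_mul
      · exact mul_le_mul_of_nonneg_right habs1 (norm_nonneg _)
      · exact hBle
      · exact norm_nonneg _
      · positivity
    have c2 : ((z.re+1) * (1+|z.im|)) * ‖I‖ * (((2:ℝ) ^ z.re)⁻¹)
        ≤ ((2:ℝ) ^ z.re * (1+|z.im|)) * ‖I‖ * (((2:ℝ) ^ z.re)⁻¹) := by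
      apply mul_le_mul_of_nonneg_right
      apply mul_le_mul_of_nonneg_right
      · exact mul_le_mul_of_nonneg_right hP hpos.le
      · exact norm_nonneg _
      · positivity
    have c3 : ((2:ℝ) ^ z.re * (1+|z.im|)) * ‖I‖ * (((2:ℝ) ^ z.re)⁻¹)
        = (1 + |z.im|) * ‖I‖ := by
      field_simp
    calc (1:ℝ) = ‖z+1‖ * ‖I‖ * ‖B‖ := h1.symm
      _ ≤ _ := c1
      _ ≤ _ := c2
      _ = _ := c3
  rw [one_mul, Real.rpow_neg_one]
  calc (1 + |z.im|)⁻¹ = (1 + |z.im|)⁻¹ * 1 := (mul_one _).symm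
    _ ≤ (1 + |z.im|)⁻¹ * ((1 + |z.im|) * ‖I‖) :=
        mul_le_mul_of_nonneg_left hstep (by positivity)
    _ = ‖I‖ := by rw [← mul_assoc, inv_mul_cancel₀ hpos.ne', one_mul]
end

section
/- Let (Z_ℓ)_{ℓ≥1} be independent Poisson random variables with E[Z_ℓ] = 1/ℓ and set Y_N(t) := Σ_{ℓ ≤ N} Z_ℓ·log|1 − e(ℓt)|. There exist absolute constants c, c', C > 0 such that for every α ∈ (0,1) and every integer ξ₀ ≥ 1 with ξ₀ ≤ c'·α²·log N, one has, except on an event of probability at most C·ξ₀·N^{−cα/ξ₀}: sup_{t ∈ Maj(ξ₀, N^{−α})} Y_N(t) ≤ −α²·(log N)² / (128·ξ₀). -/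
open MeasureTheory ProbabilityTheory Finset

/-- `‖s‖`, the distance from `s` to the nearest integer. -/
noncomputable def distInt (s : ℝ) : ℝ := |s - round s|

/-- The major arcs `Maj(ξ₀,κ) = ∪_{1 ≤ ξ ≤ ξ₀} {t ∈ [0,1) : ‖ξt‖ ≤ κ}`. -/
def MajSet (ξ₀ : ℕ) (κ : ℝ) : Set ℝ :=
  {t | t ∈ Set.Ico (0:ℝ) 1 ∧ ∃ ξ : ℕ, 1 ≤ ξ ∧ ξ ≤ ξ₀ ∧ distInt ((ξ : ℝ) * t) ≤ κ}

/-- Extended-real logarithm with `log 0 = -∞`. -/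
noncomputable def elog (x : ℝ) : EReal := if x = 0 then ⊥ else ((Real.log x : ℝ) : EReal)

/-- The Poisson field `Y_J(t) = Σ_{ℓ ∈ J} Z_ℓ log|1 - e(ℓt)| ∈ [-∞,∞)`. -/
noncomputable def Yfield (J : Finset ℕ) (Zω : ℕ → ℕ) (t : ℝ) : EReal :=
  ∑ ℓ ∈ J, ((Zω ℓ : ℝ) : EReal) * elog (‖1 - ec ((ℓ : ℝ) * t)‖)

/-! ### Auxiliary deterministic lemmas -/

section Aux
open scoped NNReal ENNReal Nat

lemma distInt_nat_mul_le (m : ℕ) (s : ℝ) : distInt ((m:ℝ) * s) ≤ (m:ℝ) * distInt s := by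
  unfold distInt
  calc |(m:ℝ)*s - round ((m:ℝ)*s)| ≤ |(m:ℝ)*s - ((m * round s : ℤ):ℝ)| :=
        round_le ((m:ℝ)*s) (m * round s)
    _ = |(m:ℝ) * (s - round s)| := by congr 1; push_cast; ring
    _ = (m:ℝ) * |s - round s| := by
        rw [abs_mul, abs_of_nonneg (by positivity : (0:ℝ) ≤ (m:ℝ))]

lemma term_bound (z : ℕ) (x r : ℝ) (hx : 0 ≤ x) (hxr : x ≤ Real.exp r) :
    ((z:ℝ):EReal) * elog x ≤ (((z:ℝ) * r : ℝ) : EReal) := by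
  unfold elog
  rcases eq_or_lt_of_le hx with h0 | h0
  · rw [if_pos h0.symm]
    rcases Nat.eq_zero_or_pos z with hz | hz
    · subst hz; simp
    · have hzb : ((z:ℝ):EReal) * (⊥:EReal) = ⊥ :=
        EReal.mul_bot_of_pos (by exact_mod_cast Nat.cast_pos.2 hz)
      rw [hzb]; exact bot_le
  · rw [if_neg (ne_of_gt h0), ← EReal.coe_mul]
    exact_mod_cast mul_le_mul_of_nonneg_left
      ((Real.log_le_iff_le_exp h0).2 hxr) (by positivity : (0:ℝ) ≤ (z:ℝ))

lemma ereal_coe_sum (s : Finset ℕ) (f : ℕ → ℝ) :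
    ((∑ i ∈ s, f i : ℝ) : EReal) = ∑ i ∈ s, ((f i : ℝ):EReal) := by
  induction s using Finset.cons_induction with
  | empty => simp
  | cons a s ha ih => rw [Finset.sum_cons, Finset.sum_cons, ← ih]; exact EReal.coe_add _ _

lemma ec_eq (s : ℝ) : ec s = Complex.exp (((2*Real.pi*s : ℝ) : ℂ) * Complex.I) := by
  unfold ec; push_cast; ring_nf

lemma abs_ec (s : ℝ) : ‖ec s‖ = 1 := by
  rw [ec_eq]; exact Complex.norm_exp_ofReal_mul_I _

lemma abs_one_sub_ec_le_two (s : ℝ) : ‖1 - ec s‖ ≤ 2 := by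
  calc ‖1 - ec s‖ ≤ ‖(1:ℂ)‖ + ‖ec s‖ := by
        simpa using norm_sub_le (1:ℂ) (ec s)
    _ ≤ 2 := by rw [abs_ec]; norm_num

lemma abs_one_sub_exp_le (x : ℝ) : ‖1 - Complex.exp ((x:ℂ) * Complex.I)‖ ≤ |x| := by
  have h : Complex.exp ((x:ℂ) * Complex.I) = (Real.cos x : ℂ) + (Real.sin x : ℂ) * Complex.I := by
    rw [Complex.exp_mul_I, Complex.ofReal_cos, Complex.ofReal_sin]
  rw [h]
  have habs : ‖1 - ((Real.cos x : ℂ) + (Real.sin x : ℂ) * Complex.I)‖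
      = Real.sqrt ((1 - Real.cos x)^2 + (Real.sin x)^2) := by
    rw [Complex.norm_def, Complex.normSq_apply]
    have hre : (1 - ((Real.cos x : ℂ) + (Real.sin x : ℂ) * Complex.I)).re = 1 - Real.cos x := by
      simp [Complex.cos_ofReal_re, Complex.sin_ofReal_re]
    have him : (1 - ((Real.cos x : ℂ) + (Real.sin x : ℂ) * Complex.I)).im = -Real.sin x := by
      simp [Complex.cos_ofReal_re, Complex.sin_ofReal_re]
    rw [hre, him]; congr 1; ring
  rw [habs]
  have hc : (1 - Real.cos x)^2 + (Real.sin x)^2 = 2 - 2*Real.cos x := by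
    have := Real.sin_sq_add_cos_sq x; nlinarith
  rw [hc]
  have h1 : 2 - 2*Real.cos x ≤ x^2 := by
    have := Real.one_sub_sq_div_two_le_cos (x := x); nlinarith
  calc Real.sqrt (2 - 2*Real.cos x) ≤ Real.sqrt (x^2) := Real.sqrt_le_sqrt h1
    _ = |x| := Real.sqrt_sq_eq_abs x

lemma ec_sub_int (s : ℝ) (n : ℤ) : ec (s - n) = ec s := by
  unfold ec
  have h : (2 * (Real.pi:ℂ) * Complex.I * ((s:ℂ) - (n:ℂ)))
      = 2 * Real.pi * Complex.I * s - n * (2 * Real.pi * Complex.I) := by ring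
  push_cast
  rw [h, Complex.exp_sub, Complex.exp_int_mul_two_pi_mul_I n]
  simp

lemma abs_one_sub_ec_le (s : ℝ) : ‖1 - ec s‖ ≤ 2 * Real.pi * distInt s := by
  have key := abs_one_sub_exp_le (2*Real.pi*(s - round s))
  have h2 : ‖1 - ec s‖ ≤ |2*Real.pi*(s - round s)| := by
    rw [← ec_sub_int s (round s), ec_eq]; exact key
  calc ‖1 - ec s‖ ≤ |2*Real.pi*(s - round s)| := h2
    _ = 2*Real.pi*|s - round s| := by
        rw [abs_mul, abs_of_pos (by positivity : (0:ℝ) < 2*Real.pi)]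
    _ = 2*Real.pi*distInt s := rfl

/-- Deterministic bound for the field on a single major arc. -/
lemma yfield_bound (N ξ M : ℕ) (Zω : ℕ → ℕ) (t κ ρ : ℝ)
    (hsub : (Finset.Icc 1 M).image (fun m => ξ*m) ⊆ Finset.Icc 1 N)
    (ht : distInt ((ξ:ℝ)*t) ≤ κ) (hκ : 0 ≤ κ)
    (hρ : 2*Real.pi*M*κ ≤ Real.exp ρ) :
    Yfield (Finset.Icc 1 N) Zω t ≤
      ((ρ * (∑ ℓ ∈ (Finset.Icc 1 M).image (fun m => ξ*m), (Zω ℓ:ℝ))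
        + Real.log 2 * (∑ ℓ ∈ Finset.Icc 1 N, (Zω ℓ:ℝ)) : ℝ) : EReal) := by
  classical
  set A := (Finset.Icc 1 M).image (fun m => ξ*m) with hA
  have hterm : ∀ ℓ ∈ Finset.Icc 1 N,
      ((Zω ℓ : ℝ):EReal) * elog (‖1 - ec ((ℓ:ℝ)*t)‖)
        ≤ (((Zω ℓ:ℝ) * (if ℓ ∈ A then ρ else Real.log 2) : ℝ) : EReal) := by
    intro ℓ _
    apply term_bound _ _ _ (norm_nonneg _)
    by_cases hAℓ : ℓ ∈ A
    · rw [if_pos hAℓ]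
      obtain ⟨m, hm, rfl⟩ := Finset.mem_image.1 hAℓ
      obtain ⟨hm1, hmM⟩ := Finset.mem_Icc.1 hm
      have hcast : ((ξ*m : ℕ):ℝ) * t = (m:ℝ) * ((ξ:ℝ) * t) := by push_cast; ring
      calc ‖1 - ec (((ξ*m:ℕ):ℝ)*t)‖ ≤ 2*Real.pi*distInt (((ξ*m:ℕ):ℝ)*t) :=
            abs_one_sub_ec_le _
        _ ≤ 2*Real.pi*((m:ℝ)*κ) := by
            rw [hcast]
            have := (distInt_nat_mul_le m ((ξ:ℝ)*t)).trans
              (mul_le_mul_of_nonneg_left ht (by positivity : (0:ℝ) ≤ (m:ℝ)))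
            have hpi : (0:ℝ) < 2*Real.pi := by positivity
            nlinarith [this]
        _ ≤ 2*Real.pi*((M:ℝ)*κ) := by
            have hmM' : (m:ℝ) ≤ (M:ℝ) := by exact_mod_cast hmM
            gcongr
        _ ≤ Real.exp ρ := by rw [← mul_assoc]; exact hρ
    · rw [if_neg hAℓ, Real.exp_log two_pos]
      exact abs_one_sub_ec_le_two _
  calc Yfield (Finset.Icc 1 N) Zω t
      ≤ ∑ ℓ ∈ Finset.Icc 1 N,
          (((Zω ℓ:ℝ) * (if ℓ ∈ A then ρ else Real.log 2) : ℝ) : EReal) :=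
        Finset.sum_le_sum hterm
    _ = ((∑ ℓ ∈ Finset.Icc 1 N,
          (Zω ℓ:ℝ) * (if ℓ ∈ A then ρ else Real.log 2) : ℝ) : EReal) :=
        (ereal_coe_sum _ _).symm
    _ ≤ _ := by
        apply EReal.coe_le_coe_iff.2
        have hsplit : ∑ ℓ ∈ Finset.Icc 1 N, (Zω ℓ:ℝ) * (if ℓ ∈ A then ρ else Real.log 2)
            = (∑ ℓ ∈ A, (Zω ℓ:ℝ) * ρ)
              + ∑ ℓ ∈ (Finset.Icc 1 N) \ A, (Zω ℓ:ℝ) * Real.log 2 := by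
          rw [← Finset.sum_inter_add_sum_sdiff (Finset.Icc 1 N) A
            (fun ℓ => (Zω ℓ:ℝ) * (if ℓ ∈ A then ρ else Real.log 2))]
          congr 1
          · rw [Finset.inter_eq_right.2 hsub]
            exact Finset.sum_congr rfl (fun ℓ hℓ => by rw [if_pos hℓ])
          · exact Finset.sum_congr rfl
              (fun ℓ hℓ => by rw [if_neg (Finset.mem_sdiff.1 hℓ).2])
        rw [hsplit]
        have h1 : ∑ ℓ ∈ A, (Zω ℓ:ℝ) * ρ = ρ * ∑ ℓ ∈ A, (Zω ℓ:ℝ) := by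
          rw [Finset.mul_sum]; exact Finset.sum_congr rfl (fun ℓ _ => mul_comm _ _)
        have h2 : ∑ ℓ ∈ (Finset.Icc 1 N) \ A, (Zω ℓ:ℝ) * Real.log 2
            ≤ Real.log 2 * ∑ ℓ ∈ Finset.Icc 1 N, (Zω ℓ:ℝ) := by
          rw [Finset.mul_sum]
          have hmono := Finset.sum_le_sum_of_subset_of_nonneg
            (Finset.sdiff_subset : (Finset.Icc 1 N) \ A ⊆ Finset.Icc 1 N)
            (f := fun ℓ => (Zω ℓ:ℝ) * Real.log 2)
            (fun ℓ _ _ => mul_nonneg (by positivity) (Real.log_nonneg one_le_two))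
          calc ∑ ℓ ∈ (Finset.Icc 1 N) \ A, (Zω ℓ:ℝ) * Real.log 2
              ≤ ∑ ℓ ∈ Finset.Icc 1 N, (Zω ℓ:ℝ) * Real.log 2 := hmono
            _ = ∑ ℓ ∈ Finset.Icc 1 N, Real.log 2 * (Zω ℓ:ℝ) :=
                Finset.sum_congr rfl (fun ℓ _ => mul_comm _ _)
        linarith [h1, h2]

/-! ### Poisson moment generating function -/

lemma poisson_summable (r : ℝ≥0) (t : ℝ) :
    Summable (fun n : ℕ => poissonPMFReal r n * Real.exp (t * n)) := by
  have h : ∀ n : ℕ, poissonPMFReal r n * Real.exp (t * n)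
      = Real.exp (-(r:ℝ)) * (((r:ℝ) * Real.exp t) ^ n / n !) := by
    intro n; unfold poissonPMFReal
    rw [mul_pow, ← Real.exp_nat_mul]
    field_simp
  simp_rw [h]
  exact (Real.summable_pow_div_factorial _).mul_left _

lemma poisson_tsum (r : ℝ≥0) (t : ℝ) :
    ∑' n : ℕ, poissonPMFReal r n * Real.exp (t * n) = Real.exp ((r:ℝ) * (Real.exp t - 1)) := by
  have h : ∀ n : ℕ, poissonPMFReal r n * Real.exp (t * n)
      = Real.exp (-(r:ℝ)) * (((r:ℝ) * Real.exp t) ^ n / n !) := by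
    intro n; unfold poissonPMFReal
    rw [mul_pow, ← Real.exp_nat_mul]
    field_simp
  simp_rw [h]
  rw [tsum_mul_left, (NormedSpace.expSeries_div_hasSum_exp ((r:ℝ) * Real.exp t)).tsum_eq,
    ← Real.exp_eq_exp_ℝ, ← Real.exp_add]
  ring_nf

lemma poissonPMF_apply (r : ℝ≥0) (n : ℕ) :
    poissonPMF r n = ENNReal.ofReal (poissonPMFReal r n) := rfl

lemma poisson_integrable (r : ℝ≥0) (t : ℝ) :
    Integrable (fun n : ℕ => Real.exp (t * n)) (poissonPMF r).toMeasure := by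
  constructor
  · exact (measurable_from_top (f := fun n : ℕ => Real.exp (t*n))).aestronglyMeasurable
  · rw [HasFiniteIntegral, lintegral_countable']
    have hv : ∀ n : ℕ, ‖Real.exp (t*n)‖ₑ * (poissonPMF r).toMeasure {n}
        = ENNReal.ofReal (poissonPMFReal r n * Real.exp (t * n)) := by
      intro n
      rw [PMF.toMeasure_apply_singleton _ _ (MeasurableSet.singleton n), poissonPMF_apply,
        ENNReal.ofReal_mul poissonPMFReal_nonneg,
        Real.enorm_eq_ofReal (Real.exp_pos _).le, mul_comm]
    simp_rw [hv]
    rw [← ENNReal.ofReal_tsum_of_nonneg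
      (fun n => mul_nonneg poissonPMFReal_nonneg (Real.exp_pos _).le) (poisson_summable r t)]
    exact ENNReal.ofReal_lt_top

lemma poisson_mgf_int (r : ℝ≥0) (t : ℝ) :
    ∫ n : ℕ, Real.exp (t * n) ∂((poissonPMF r).toMeasure)
      = Real.exp ((r:ℝ) * (Real.exp t - 1)) := by
  rw [PMF.integral_eq_tsum _ _ (poisson_integrable r t), ← poisson_tsum r t]
  congr 1; ext n
  rw [poissonPMF_apply, smul_eq_mul, ENNReal.toReal_ofReal poissonPMFReal_nonneg]

set_option linter.unusedSectionVars false

variable {Ω : Type} [MeasurableSpace Ω] {μ : Measure Ω} [IsProbabilityMeasure μ]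
  {Z : ℕ → Ω → ℕ}

lemma Z_exp_integrable (hm : ∀ ℓ, Measurable (Z ℓ))
    (hmap : ∀ ℓ : ℕ, 1 ≤ ℓ → Measure.map (Z ℓ) μ = ((poissonPMF ((ℓ : NNReal)⁻¹)).toMeasure))
    (ℓ : ℕ) (hℓ : 1 ≤ ℓ) (t : ℝ) :
    Integrable (fun ω => Real.exp (t * ((Z ℓ ω : ℕ):ℝ))) μ := by
  have h := poisson_integrable ((ℓ : NNReal)⁻¹) t
  rw [← hmap ℓ hℓ] at h
  exact (integrable_map_measure
    (measurable_from_top (f := fun n : ℕ => Real.exp (t*n))).aestronglyMeasurable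
    (hm ℓ).aemeasurable).1 h

lemma Z_mgf (hm : ∀ ℓ, Measurable (Z ℓ))
    (hmap : ∀ ℓ : ℕ, 1 ≤ ℓ → Measure.map (Z ℓ) μ = ((poissonPMF ((ℓ : NNReal)⁻¹)).toMeasure))
    (ℓ : ℕ) (hℓ : 1 ≤ ℓ) (t : ℝ) :
    mgf (fun ω => ((Z ℓ ω : ℕ):ℝ)) μ t = Real.exp (((ℓ:ℝ))⁻¹ * (Real.exp t - 1)) := by
  have h1 : mgf (fun ω => ((Z ℓ ω : ℕ):ℝ)) μ t
      = ∫ n : ℕ, Real.exp (t * n) ∂(Measure.map (Z ℓ) μ) := by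
    rw [integral_map (hm ℓ).aemeasurable
      (measurable_from_top (f := fun n : ℕ => Real.exp (t*n))).aestronglyMeasurable]
    rfl
  rw [h1, hmap ℓ hℓ, poisson_mgf_int]
  norm_num

lemma Z_sum_mgf (hm : ∀ ℓ, Measurable (Z ℓ))
    (hindep : iIndepFun Z μ)
    (hmap : ∀ ℓ : ℕ, 1 ≤ ℓ → Measure.map (Z ℓ) μ = ((poissonPMF ((ℓ : NNReal)⁻¹)).toMeasure))
    (s : Finset ℕ) (hs : ∀ ℓ ∈ s, 1 ≤ ℓ) (t : ℝ) :
    mgf (∑ ℓ ∈ s, fun ω => ((Z ℓ ω : ℕ):ℝ)) μ t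
      = Real.exp ((Real.exp t - 1) * ∑ ℓ ∈ s, ((ℓ:ℝ))⁻¹) := by
  have hindep' : iIndepFun (fun ℓ ω => ((Z ℓ ω : ℕ):ℝ)) μ :=
    hindep.comp (fun _ (n : ℕ) => (n:ℝ)) (fun _ => measurable_from_top)
  have hmeas' : ∀ ℓ : ℕ, Measurable (fun ω => ((Z ℓ ω : ℕ):ℝ)) :=
    fun ℓ => (measurable_from_top (f := fun n : ℕ => (n:ℝ))).comp (hm ℓ)
  rw [hindep'.mgf_sum hmeas' s, Finset.mul_sum, Real.exp_sum]
  exact Finset.prod_congr rfl (fun ℓ hℓ => by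
    rw [Z_mgf hm hmap ℓ (hs ℓ hℓ) t, mul_comm])

lemma Z_sum_exp_integrable (hm : ∀ ℓ, Measurable (Z ℓ))
    (hindep : iIndepFun Z μ)
    (hmap : ∀ ℓ : ℕ, 1 ≤ ℓ → Measure.map (Z ℓ) μ = ((poissonPMF ((ℓ : NNReal)⁻¹)).toMeasure))
    (s : Finset ℕ) (hs : ∀ ℓ ∈ s, 1 ≤ ℓ) (t : ℝ) :
    Integrable (fun ω => Real.exp (t * (∑ ℓ ∈ s, fun ω' => ((Z ℓ ω' : ℕ):ℝ)) ω)) μ := by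
  have hindep' : iIndepFun (fun ℓ ω => ((Z ℓ ω : ℕ):ℝ)) μ :=
    hindep.comp (fun _ (n : ℕ) => (n:ℝ)) (fun _ => measurable_from_top)
  have hmeas' : ∀ ℓ : ℕ, Measurable (fun ω => ((Z ℓ ω : ℕ):ℝ)) :=
    fun ℓ => (measurable_from_top (f := fun n : ℕ => (n:ℝ))).comp (hm ℓ)
  exact hindep'.integrable_exp_mul_sum hmeas'
    (fun ℓ hℓ => Z_exp_integrable hm hmap ℓ (hs ℓ hℓ) t)

/-- Chernoff upper tail. -/
lemma Z_sum_upper (hm : ∀ ℓ, Measurable (Z ℓ))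
    (hindep : iIndepFun Z μ)
    (hmap : ∀ ℓ : ℕ, 1 ≤ ℓ → Measure.map (Z ℓ) μ = ((poissonPMF ((ℓ : NNReal)⁻¹)).toMeasure))
    (s : Finset ℕ) (hs : ∀ ℓ ∈ s, 1 ≤ ℓ) (t ε : ℝ) (ht : 0 ≤ t) :
    μ {ω | ε ≤ ∑ ℓ ∈ s, ((Z ℓ ω : ℕ):ℝ)}
      ≤ ENNReal.ofReal (Real.exp (-t * ε + (Real.exp t - 1) * ∑ ℓ ∈ s, ((ℓ:ℝ))⁻¹)) := by
  have hint := Z_sum_exp_integrable hm hindep hmap s hs t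
  have h := measure_ge_le_exp_mul_mgf (μ := μ) (X := ∑ ℓ ∈ s, fun ω => ((Z ℓ ω : ℕ):ℝ))
    ε ht hint
  rw [Z_sum_mgf hm hindep hmap s hs t] at h
  have hset : {ω | ε ≤ ∑ ℓ ∈ s, ((Z ℓ ω : ℕ):ℝ)}
      = {ω | ε ≤ (∑ ℓ ∈ s, fun ω' => ((Z ℓ ω' : ℕ):ℝ)) ω} := by
    ext ω; simp [Finset.sum_apply]
  rw [hset, ← ENNReal.ofReal_toReal (measure_ne_top μ _)]
  apply ENNReal.ofReal_le_ofReal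
  rw [← Real.exp_add] at h
  exact h

/-- Chernoff lower tail. -/
lemma Z_sum_lower (hm : ∀ ℓ, Measurable (Z ℓ))
    (hindep : iIndepFun Z μ)
    (hmap : ∀ ℓ : ℕ, 1 ≤ ℓ → Measure.map (Z ℓ) μ = ((poissonPMF ((ℓ : NNReal)⁻¹)).toMeasure))
    (s : Finset ℕ) (hs : ∀ ℓ ∈ s, 1 ≤ ℓ) (t ε : ℝ) (ht : t ≤ 0) :
    μ {ω | ∑ ℓ ∈ s, ((Z ℓ ω : ℕ):ℝ) ≤ ε}
      ≤ ENNReal.ofReal (Real.exp (-t * ε + (Real.exp t - 1) * ∑ ℓ ∈ s, ((ℓ:ℝ))⁻¹)) := by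
  have hint := Z_sum_exp_integrable hm hindep hmap s hs t
  have h := measure_le_le_exp_mul_mgf (μ := μ) (X := ∑ ℓ ∈ s, fun ω => ((Z ℓ ω : ℕ):ℝ))
    ε ht hint
  rw [Z_sum_mgf hm hindep hmap s hs t] at h
  have hset : {ω | ∑ ℓ ∈ s, ((Z ℓ ω : ℕ):ℝ) ≤ ε}
      = {ω | (∑ ℓ ∈ s, fun ω' => ((Z ℓ ω' : ℕ):ℝ)) ω ≤ ε} := by
    ext ω; simp [Finset.sum_apply]
  rw [hset, ← ENNReal.ofReal_toReal (measure_ne_top μ _)]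
  apply ENNReal.ofReal_le_ofReal
  rw [← Real.exp_add] at h
  exact h

/-! ### Harmonic sums -/

lemma sum_Icc_inv_eq_harmonic (n : ℕ) :
    ∑ ℓ ∈ Finset.Icc 1 n, ((ℓ:ℝ))⁻¹ = ((harmonic n : ℚ) : ℝ) := by
  rw [harmonic_eq_sum_Icc]
  push_cast
  rfl

lemma log_le_sum_Icc_inv (n : ℕ) :
    Real.log ((n:ℝ)+1) ≤ ∑ ℓ ∈ Finset.Icc 1 n, ((ℓ:ℝ))⁻¹ := by
  rw [sum_Icc_inv_eq_harmonic]; exact_mod_cast log_add_one_le_harmonic n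

lemma sum_Icc_inv_le (n : ℕ) :
    ∑ ℓ ∈ Finset.Icc 1 n, ((ℓ:ℝ))⁻¹ ≤ 1 + Real.log n := by
  rw [sum_Icc_inv_eq_harmonic]; exact harmonic_le_one_add_log n

lemma sum_image_inv (ξ M : ℕ) (hξ : 1 ≤ ξ) :
    ∑ ℓ ∈ (Finset.Icc 1 M).image (fun m => ξ*m), ((ℓ:ℝ))⁻¹
      = ((ξ:ℝ))⁻¹ * ∑ m ∈ Finset.Icc 1 M, ((m:ℝ))⁻¹ := by
  rw [Finset.sum_image (fun a _ b _ h => Nat.eq_of_mul_eq_mul_left hξ h), Finset.mul_sum]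
  apply Finset.sum_congr rfl
  intro m _
  push_cast
  rw [mul_inv]

end Aux

set_option maxHeartbeats 1000000 in
/-- upper bound for the Poisson field on major arcs: except on an event
of probability `O(ξ₀ N^{-cα/ξ₀})`,
`sup_{t ∈ Maj(ξ₀, N^{-α})} Y_N(t) ≤ -α²(log N)²/(128 ξ₀)`. -/
theorem poisson_field_major_arcs :
    ∃ c c' C : ℝ, 0 < c ∧ 0 < c' ∧ 0 < C ∧
      ∀ (Ω : Type) (_ : MeasurableSpace Ω) (μ : Measure Ω), IsProbabilityMeasure μ →
      ∀ (Z : ℕ → Ω → ℕ),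
        (∀ ℓ, Measurable (Z ℓ)) →
        iIndepFun Z μ →
        (∀ ℓ : ℕ, 1 ≤ ℓ → Measure.map (Z ℓ) μ = ((poissonPMF ((ℓ : NNReal)⁻¹)).toMeasure)) →
      ∀ (N : ℕ) (α : ℝ) (ξ₀ : ℕ),
        0 < α → α < 1 → 1 ≤ ξ₀ → (ξ₀ : ℝ) ≤ c' * α ^ 2 * Real.log N →
        μ {ω | ¬ (⨆ t : MajSet ξ₀ ((N : ℝ) ^ (-α)),
                    Yfield (Finset.Icc 1 N) (fun ℓ => Z ℓ ω) (t : ℝ))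
                  ≤ ((-(α ^ 2) * (Real.log N) ^ 2 / (128 * (ξ₀ : ℝ)) : ℝ) : EReal)}
          ≤ ENNReal.ofReal (C * (ξ₀ : ℝ) * (N : ℝ) ^ (-(c * α / (ξ₀ : ℝ)))) := by
  refine ⟨1/16, 1/512, 4, by norm_num, by norm_num, by norm_num, ?_⟩
  intro Ω mΩ μ hprob Z hmeas hindep hmap N α ξ₀ hα0 hα1 hξ₀1 hξ₀c
  haveI := hprob
  set L := Real.log N with hLdef
  have hξ₀R : (1:ℝ) ≤ (ξ₀:ℝ) := by exact_mod_cast hξ₀1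
  have hξ₀pos : (0:ℝ) < (ξ₀:ℝ) := by linarith
  have hα2pos : 0 < α^2 := pow_pos hα0 2
  have hkey : 512 * (ξ₀:ℝ) ≤ α^2 * L := by nlinarith [hξ₀c]
  have h512 : (512:ℝ) ≤ α^2 * L := by nlinarith
  have hLpos : 0 < L := by nlinarith
  have hα2le1 : α^2 ≤ 1 := by nlinarith
  have hαle1 : α ≤ 1 := hα1.le
  have hL512 : (512:ℝ) ≤ L := by nlinarith
  have hαL : (512:ℝ) ≤ α * L := by nlinarith
  have hN1 : (1:ℝ) < (N:ℝ) := by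
    by_contra h
    push_neg at h
    have := Real.log_nonpos (by positivity) h
    rw [← hLdef] at this
    linarith
  have hNpos : (0:ℝ) < (N:ℝ) := lt_trans one_pos hN1
  -- the scale M and the arithmetic progressions
  set M := ⌊(N:ℝ)^(α/2)⌋₊ with hMdef
  have hrpow_pos : 0 < (N:ℝ)^(α/2) := Real.rpow_pos_of_pos hNpos _
  have hMle : (M:ℝ) ≤ (N:ℝ)^(α/2) := Nat.floor_le hrpow_pos.le
  have hMlt : (N:ℝ)^(α/2) < (M:ℝ) + 1 := Nat.lt_floor_add_one _
  have hsqrt_pos : 0 < (N:ℝ)^((1:ℝ)/2) := Real.rpow_pos_of_pos hNpos _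
  have hhalf : (N:ℝ)^(α/2) ≤ (N:ℝ)^((1:ℝ)/2) :=
    Real.rpow_le_rpow_of_exponent_le hN1.le (by linarith)
  have hsq : (N:ℝ)^((1:ℝ)/2) * (N:ℝ)^((1:ℝ)/2) = (N:ℝ) := by
    rw [← Real.rpow_add hNpos]; norm_num
  have hLle : L ≤ 2 * (N:ℝ)^((1:ℝ)/2) := by
    have h1 := Real.log_le_sub_one_of_pos hsqrt_pos
    rw [Real.log_rpow hNpos] at h1
    rw [← hLdef] at h1
    linarith
  set A : ℕ → Finset ℕ := fun ξ => (Finset.Icc 1 M).image (fun m => ξ*m) with hAdef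
  have hA_sub : ∀ ξ, 1 ≤ ξ → ξ ≤ ξ₀ → A ξ ⊆ Finset.Icc 1 N := by
    intro ξ hξ1 hξ2 ℓ hℓ
    obtain ⟨m, hm, rfl⟩ := Finset.mem_image.1 hℓ
    obtain ⟨hm1, hmM⟩ := Finset.mem_Icc.1 hm
    rw [Finset.mem_Icc]
    refine ⟨Nat.one_le_iff_ne_zero.2 (Nat.mul_ne_zero (by omega) (by omega)), ?_⟩
    have hc : ((ξ*m:ℕ):ℝ) ≤ (N:ℝ) := by
      push_cast
      have h1 : (ξ:ℝ) ≤ (ξ₀:ℝ) := by exact_mod_cast hξ2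
      have h2 : (m:ℝ) ≤ (M:ℝ) := by exact_mod_cast hmM
      have h3 : (ξ:ℝ) * m ≤ (ξ₀:ℝ) * M :=
        mul_le_mul h1 h2 (by positivity) (by positivity)
      have h4 : (ξ₀:ℝ) * M ≤ (L/512) * (N:ℝ)^((1:ℝ)/2) := by
        apply mul_le_mul ?_ (hMle.trans hhalf) (by positivity) (by positivity)
        have hq : α^2*L ≤ L := by nlinarith
        linarith
      have h5 : (L/512) * (N:ℝ)^((1:ℝ)/2) ≤ (N:ℝ)/256 := by
        nlinarith [mul_le_mul_of_nonneg_right hLle hsqrt_pos.le, hsq]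
      linarith
    exact_mod_cast hc
  -- threshold for the T-sums
  set a := α*L/(16*(ξ₀:ℝ)) with hadef
  have ha_pos : 0 < a := by positivity
  have ha_leL : a ≤ L := by
    rw [hadef, div_le_iff₀ (by positivity)]
    nlinarith
  -- lower bound on Σ_{ℓ ∈ A ξ} 1/ℓ
  have hlamT : ∀ ξ, 1 ≤ ξ → ξ ≤ ξ₀ → 8 * a ≤ ∑ ℓ ∈ A ξ, ((ℓ:ℝ))⁻¹ := by
    intro ξ hξ1 hξ2
    have hξpos : (0:ℝ) < (ξ:ℝ) := by exact_mod_cast Nat.lt_of_lt_of_le Nat.zero_lt_one hξ1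
    have hξle : (ξ:ℝ) ≤ (ξ₀:ℝ) := by exact_mod_cast hξ2
    have himg := sum_image_inv ξ M hξ1
    have hHM := log_le_sum_Icc_inv M
    have hlogM : α/2 * L ≤ Real.log ((M:ℝ)+1) := by
      have := Real.log_le_log hrpow_pos hMlt.le
      rw [Real.log_rpow hNpos] at this
      rw [← hLdef] at this
      linarith [this]
    have hξinv : ((ξ₀:ℝ))⁻¹ ≤ ((ξ:ℝ))⁻¹ := by
      apply inv_anti₀ hξpos hξle
    calc 8 * a = (ξ₀:ℝ)⁻¹ * (α/2 * L) := by rw [hadef]; field_simp; ring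
      _ ≤ (ξ:ℝ)⁻¹ * (α/2 * L) :=
        mul_le_mul_of_nonneg_right hξinv (by positivity)
      _ ≤ (ξ:ℝ)⁻¹ * ∑ m ∈ Finset.Icc 1 M, ((m:ℝ))⁻¹ :=
        mul_le_mul_of_nonneg_left (hlogM.trans hHM) (by positivity)
      _ = ∑ ℓ ∈ A ξ, ((ℓ:ℝ))⁻¹ := himg.symm
  -- the exceptional events
  set ES : Set Ω := {ω | 4*L ≤ ∑ ℓ ∈ Finset.Icc 1 N, ((Z ℓ ω : ℕ):ℝ)} with hESdef
  set ET : ℕ → Set Ω := fun ξ => {ω | ∑ ℓ ∈ A ξ, ((Z ℓ ω : ℕ):ℝ) ≤ a} with hETdef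
  have hlog2_pos : (0:ℝ) ≤ Real.log 2 := Real.log_nonneg one_le_two
  have hlog2_lt : (0.6931471803:ℝ) < Real.log 2 := Real.log_two_gt_d9
  have hlog2_le1 : Real.log 2 ≤ 1 := by
    have := Real.log_le_sub_one_of_pos (by norm_num : (0:ℝ) < 2); linarith
  have hES : μ ES ≤ ENNReal.ofReal (Real.exp 1 * Real.exp (-L)) := by
    have h := Z_sum_upper hmeas hindep hmap (Finset.Icc 1 N)
      (fun ℓ hℓ => (Finset.mem_Icc.1 hℓ).1) (Real.log 2) (4*L) hlog2_pos
    refine h.trans (ENNReal.ofReal_le_ofReal ?_)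
    rw [← Real.exp_add]
    apply Real.exp_le_exp.2
    rw [Real.exp_log (by norm_num : (0:ℝ) < 2)]
    have hHN := sum_Icc_inv_le N
    rw [← hLdef] at hHN
    have hsum_nonneg : (0:ℝ) ≤ ∑ ℓ ∈ Finset.Icc 1 N, ((ℓ:ℝ))⁻¹ :=
      Finset.sum_nonneg (fun ℓ _ => by positivity)
    nlinarith
  have hET : ∀ ξ ∈ Finset.Icc 1 ξ₀, μ (ET ξ) ≤ ENNReal.ofReal (Real.exp (-a)) := by
    intro ξ hξ
    obtain ⟨hξ1, hξ2⟩ := Finset.mem_Icc.1 hξ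
    have hs1 : ∀ ℓ ∈ A ξ, 1 ≤ ℓ := fun ℓ hℓ => (Finset.mem_Icc.1 (hA_sub ξ hξ1 hξ2 hℓ)).1
    have h := Z_sum_lower hmeas hindep hmap (A ξ) hs1 (-(Real.log 2)) a (by linarith)
    refine h.trans (ENNReal.ofReal_le_ofReal ?_)
    apply Real.exp_le_exp.2
    rw [Real.exp_neg, Real.exp_log (by norm_num : (0:ℝ) < 2)]
    have hlam := hlamT ξ hξ1 hξ2
    nlinarith
  -- the combined bound on the union of exceptional events
  have key : μ (ES ∪ ⋃ ξ ∈ Finset.Icc 1 ξ₀, ET ξ)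
      ≤ ENNReal.ofReal (4 * (ξ₀:ℝ) * (N:ℝ)^(-(1/16 * α / (ξ₀:ℝ)))) := by
    calc μ (ES ∪ ⋃ ξ ∈ Finset.Icc 1 ξ₀, ET ξ)
        ≤ μ ES + μ (⋃ ξ ∈ Finset.Icc 1 ξ₀, ET ξ) := measure_union_le _ _
      _ ≤ μ ES + ∑ ξ ∈ Finset.Icc 1 ξ₀, μ (ET ξ) :=
          add_le_add le_rfl (measure_biUnion_finset_le _ _)
      _ ≤ ENNReal.ofReal (Real.exp 1 * Real.exp (-L))
            + ∑ ξ ∈ Finset.Icc 1 ξ₀, ENNReal.ofReal (Real.exp (-a)) :=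
          add_le_add hES (Finset.sum_le_sum hET)
      _ = ENNReal.ofReal (Real.exp 1 * Real.exp (-L))
            + ENNReal.ofReal ((ξ₀:ℝ) * Real.exp (-a)) := by
          rw [Finset.sum_const, Nat.card_Icc]
          simp only [Nat.add_sub_cancel, nsmul_eq_mul]
          rw [← ENNReal.ofReal_natCast ξ₀,
            ← ENNReal.ofReal_mul (by positivity : (0:ℝ) ≤ (ξ₀:ℝ))]
      _ ≤ ENNReal.ofReal (4 * (ξ₀:ℝ) * (N:ℝ)^(-(1/16 * α / (ξ₀:ℝ)))) := by
          rw [← ENNReal.ofReal_add (by positivity) (by positivity)]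
          apply ENNReal.ofReal_le_ofReal
          have hrpow : (N:ℝ)^(-(1/16 * α / (ξ₀:ℝ))) = Real.exp (-a) := by
            rw [Real.rpow_def_of_pos hNpos, ← hLdef, hadef]
            congr 1
            field_simp
          rw [hrpow]
          have hexp1 : Real.exp 1 ≤ 3 := by nlinarith [Real.exp_one_lt_d9]
          have hmono : Real.exp (-L) ≤ Real.exp (-a) := Real.exp_le_exp.2 (by linarith)
          have hexppos : 0 < Real.exp (-a) := Real.exp_pos _
          have hexppos2 : 0 < Real.exp (-L) := Real.exp_pos _
          have m1 : Real.exp 1 * Real.exp (-L) ≤ 3 * Real.exp (-a) := by nlinarith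
          have m2 : 3*Real.exp (-a) ≤ 3*(ξ₀:ℝ)*Real.exp (-a) := by nlinarith
          linarith
  refine le_trans (measure_mono ?_) key
  -- inclusion of the bad event in the union
  intro ω hω
  by_contra hcon
  apply hω
  have hS : ω ∉ ES := fun h => hcon (Set.mem_union_left _ h)
  have hT : ∀ ξ ∈ Finset.Icc 1 ξ₀, ω ∉ ET ξ :=
    fun ξ hξ h => hcon (Set.mem_union_right _ (Set.mem_biUnion hξ h))
  simp only [hESdef, Set.mem_setOf_eq] at hS
  have hSω : ∑ ℓ ∈ Finset.Icc 1 N, ((Z ℓ ω : ℕ):ℝ) < 4*L := not_le.1 hS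
  apply iSup_le
  rintro ⟨t, htIco, ξ, hξ1, hξ2, hdist⟩
  have hκ0 : (0:ℝ) ≤ (N:ℝ)^(-α) := (Real.rpow_pos_of_pos hNpos _).le
  have hρ : 2*Real.pi*(M:ℝ)*((N:ℝ)^(-α)) ≤ Real.exp (-(α*L)/4) := by
    have h2pi : 2*Real.pi ≤ Real.exp 2 := by
      have he : Real.exp 2 = Real.exp 1 * Real.exp 1 := by
        rw [← Real.exp_add]; norm_num
      nlinarith [Real.pi_lt_d2, Real.exp_one_gt_d9, he]
    have hκval : (N:ℝ)^(-α) = Real.exp (-(α*L)) := by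
      rw [Real.rpow_def_of_pos hNpos, ← hLdef]; ring_nf
    have hMval : (N:ℝ)^(α/2) = Real.exp (α*L/2) := by
      rw [Real.rpow_def_of_pos hNpos, ← hLdef]; ring_nf
    have hMκ : (M:ℝ)*((N:ℝ)^(-α)) ≤ Real.exp (-(α*L)/2) := by
      calc (M:ℝ)*((N:ℝ)^(-α)) ≤ (N:ℝ)^(α/2) * ((N:ℝ)^(-α)) :=
            mul_le_mul_of_nonneg_right hMle hκ0
        _ = Real.exp (α*L/2) * Real.exp (-(α*L)) := by rw [hMval, hκval]
        _ = Real.exp (-(α*L)/2) := by rw [← Real.exp_add]; ring_nf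
    calc 2*Real.pi*(M:ℝ)*((N:ℝ)^(-α)) = (2*Real.pi) * ((M:ℝ)*((N:ℝ)^(-α))) := by ring
      _ ≤ Real.exp 2 * Real.exp (-(α*L)/2) := by
          apply mul_le_mul h2pi hMκ (by positivity) (by positivity)
      _ = Real.exp (2 + -(α*L)/2) := by rw [← Real.exp_add]
      _ ≤ Real.exp (-(α*L)/4) := Real.exp_le_exp.2 (by linarith)
  have hY := yfield_bound N ξ M (fun ℓ => Z ℓ ω) t ((N:ℝ)^(-α)) (-(α*L)/4)
    (hA_sub ξ hξ1 hξ2) hdist hκ0 hρ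
  refine hY.trans ?_
  apply EReal.coe_le_coe_iff.2
  have hTξ : a < ∑ ℓ ∈ A ξ, ((Z ℓ ω : ℕ):ℝ) := by
    have h := hT ξ (Finset.mem_Icc.2 ⟨hξ1, hξ2⟩)
    simp only [hETdef, Set.mem_setOf_eq] at h
    exact not_le.1 h
  have hS0 : (0:ℝ) ≤ ∑ ℓ ∈ Finset.Icc 1 N, ((Z ℓ ω : ℕ):ℝ) :=
    Finset.sum_nonneg (fun ℓ _ => by positivity)
  have hT0 : (0:ℝ) ≤ ∑ ℓ ∈ A ξ, ((Z ℓ ω : ℕ):ℝ) :=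
    Finset.sum_nonneg (fun ℓ _ => by positivity)
  have e1 : (-(α*L)/4) * (∑ ℓ ∈ A ξ, ((Z ℓ ω : ℕ):ℝ)) ≤ (-(α*L)/4) * a := by
    apply mul_le_mul_of_nonpos_left hTξ.le
    have : 0 ≤ α*L := by positivity
    linarith
  have e2 : Real.log 2 * (∑ ℓ ∈ Finset.Icc 1 N, ((Z ℓ ω : ℕ):ℝ)) ≤ Real.log 2 * (4*L) :=
    mul_le_mul_of_nonneg_left hSω.le hlog2_pos
  have e3 : (-(α*L)/4) * a = -(α^2*L^2)/(64*(ξ₀:ℝ)) := by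
    rw [hadef]; field_simp; ring
  have e4 : Real.log 2 * (4*L) ≤ α^2*L^2/(128*(ξ₀:ℝ)) := by
    rw [le_div_iff₀ (by positivity : (0:ℝ) < 128*(ξ₀:ℝ))]
    have k1 := mul_le_mul_of_nonneg_right hkey hLpos.le
    have k2 : Real.log 2 * ((ξ₀:ℝ)*L) ≤ 1 * ((ξ₀:ℝ)*L) :=
      mul_le_mul_of_nonneg_right hlog2_le1 (by positivity)
    linarith only [k1, k2]
  have e5 : -(α^2*L^2)/(64*(ξ₀:ℝ)) + α^2*L^2/(128*(ξ₀:ℝ))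
      = -(α^2) * L^2 / (128*(ξ₀:ℝ)) := by
    field_simp; ring
  have hfin : (-(α*L)/4) * (∑ ℓ ∈ A ξ, ((Z ℓ ω : ℕ):ℝ))
      + Real.log 2 * (∑ ℓ ∈ Finset.Icc 1 N, ((Z ℓ ω : ℕ):ℝ))
      ≤ -(α^2) * L^2 / (128*(ξ₀:ℝ)) := by linarith only [e1, e2, e3, e4, e5]
  calc _ ≤ -(α^2) * L^2 / (128*(ξ₀:ℝ)) := hfin
    _ = -(α^2) * (Real.log N)^2 / (128*(ξ₀:ℝ)) := by rw [hLdef]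
end

section
/- Let q ≥ 1 and ξ ≥ 1 be integers, θ ∈ ℝ, and κ ∈ (0,1/2). Then there is an absolute constant C > 0 such that | |T_{q,θ} ∩ B_ξ(κ)| − 2κq | ≤ C·ξ. -/
open Finset
open scoped Classical

/-- The rotated mesh `T_{q,θ} = {(j/q + θ/q²) mod 1 : 0 ≤ j ≤ q-1} ⊆ [0,1)`. -/
noncomputable def meshT (q : ℕ) (θ : ℝ) : Finset ℝ :=
  (Finset.range q).image (fun j => Int.fract ((j : ℝ) / q + θ / q ^ 2))

lemma distInt_add_int (x : ℝ) (n : ℤ) : distInt (x + n) = distInt x := by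
  unfold distInt
  rw [round_add_intCast]
  push_cast
  ring_nf

lemma distInt_le_iff_fract (x κ : ℝ) (hκ0 : 0 < κ) (hκ : κ < 1/2) :
    distInt x ≤ κ ↔ Int.fract (x + κ) ≤ 2 * κ := by
  constructor
  · intro h
    unfold distInt at h
    have h1 := abs_le.mp h
    have hfl : ⌊x + κ⌋ = round x := by
      apply Int.floor_eq_iff.mpr
      constructor
      · linarith [h1.2]
      · push_cast; linarith [h1.1]
    rw [Int.fract, hfl]
    linarith [h1.1]
  · intro h
    set n := ⌊x + κ⌋ with hn
    have h1 : (n : ℝ) ≤ x + κ := Int.floor_le _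
    have h2 : x + κ - n ≤ 2 * κ := by rw [Int.fract] at h; linarith [h]
    have : |x - (n : ℝ)| ≤ κ := abs_le.mpr ⟨by linarith, by linarith⟩
    calc distInt x ≤ |x - (n:ℝ)| := round_le x n
      _ ≤ κ := this

lemma exists_nat_inv (a n : ℕ) (h : Nat.Coprime a n) (hn : 1 ≤ n) :
    ∃ u, a * u ≡ 1 [MOD n] := by
  rcases eq_or_lt_of_le hn with h1 | h1
  · exact ⟨1, by rw [← h1]; exact Nat.modEq_one⟩
  · obtain ⟨u, -, hu⟩ := Nat.exists_mul_mod_eq_one_of_coprime h h1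
    exact ⟨u, by unfold Nat.ModEq; rw [hu, Nat.mod_eq_of_lt h1]⟩

lemma fiber_card (q' d ξ' u : ℕ) (hq' : 1 ≤ q')
    (hu : ξ' * u ≡ 1 [MOD q']) (r : ℕ) (hr : r < q') :
    ((Finset.range (d * q')).filter (fun j => (ξ' * j) % q' = r)).card = d := by
  have hq0 : 0 < q' := hq'
  set j0 := (u * r) % q' with hj0_def
  have hj0lt : j0 < q' := Nat.mod_lt _ hq0
  have hj0 : j0 ≡ u * r [MOD q'] := Nat.mod_modEq _ _
  have key : (Finset.range (d * q')).filter (fun j => (ξ' * j) % q' = r)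
      = (Finset.range d).image (fun i => j0 + i * q') := by
    ext j
    simp only [mem_filter, mem_range, mem_image]
    constructor
    · rintro ⟨hjlt, hjr⟩
      refine ⟨j / q', (Nat.div_lt_iff_lt_mul hq0).mpr hjlt, ?_⟩
      have h1 : ξ' * j ≡ r [MOD q'] := by
        unfold Nat.ModEq
        rw [hjr, Nat.mod_eq_of_lt hr]
      have h2 : j ≡ u * r [MOD q'] := by
        calc j ≡ (ξ' * u) * j [MOD q'] := by
              have := hu.mul_right j
              simpa using this.symm
          _ = u * (ξ' * j) := by ring
          _ ≡ u * r [MOD q'] := h1.mul_left u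
      have h3 : j % q' = j0 := by
        have := h2.trans hj0.symm
        unfold Nat.ModEq at this
        rwa [Nat.mod_eq_of_lt hj0lt] at this
      rw [← h3, Nat.mod_add_div' j q']
    · rintro ⟨i, hid, rfl⟩
      constructor
      · have h4 : (i + 1) * q' ≤ d * q' := Nat.mul_le_mul_right _ hid
        calc j0 + i * q' < q' + i * q' := by omega
          _ = (i + 1) * q' := by ring
          _ ≤ d * q' := h4
      · have h5 : ξ' * (j0 + i * q') ≡ r [MOD q'] := by
          calc ξ' * (j0 + i * q') = ξ' * j0 + (ξ' * i) * q' := by ring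
            _ ≡ ξ' * j0 + 0 [MOD q'] :=
              (Nat.modEq_zero_iff_dvd.mpr ⟨ξ' * i, by ring⟩).add_left _
            _ = ξ' * j0 := by ring
            _ ≡ ξ' * (u * r) [MOD q'] := hj0.mul_left ξ'
            _ = (ξ' * u) * r := by ring
            _ ≡ 1 * r [MOD q'] := hu.mul_right r
            _ = r := by ring
        unfold Nat.ModEq at h5
        rwa [Nat.mod_eq_of_lt hr] at h5
  rw [key, Finset.card_image_of_injective _ (fun a b hab => by
    exact Nat.eq_of_mul_eq_mul_right hq0 (Nat.add_left_cancel hab)), Finset.card_range]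

lemma count_rescale (q' d ξ' : ℕ) (hq' : 1 ≤ q') (hco : Nat.Coprime ξ' q')
    (P : ℕ → Prop) :
    ((Finset.range (d * q')).filter (fun j => P ((ξ' * j) % q'))).card
      = d * ((Finset.range q').filter P).card := by
  obtain ⟨u, hu⟩ := exists_nat_inv ξ' q' hco hq'
  have hq0 : 0 < q' := hq'
  have hmem : ∀ j ∈ (Finset.range (d * q')).filter (fun j => P ((ξ' * j) % q')),
      (ξ' * j) % q' ∈ (Finset.range q').filter P := by
    intro j hj
    simp only [mem_filter, mem_range] at hj ⊢
    exact ⟨Nat.mod_lt _ hq0, hj.2⟩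
  rw [Finset.card_eq_sum_card_fiberwise hmem]
  have hfib : ∀ r ∈ (Finset.range q').filter P,
      (((Finset.range (d * q')).filter (fun j => P ((ξ' * j) % q'))).filter
        (fun j => (ξ' * j) % q' = r)).card = d := by
    intro r hr
    simp only [mem_filter, mem_range] at hr
    rw [Finset.filter_filter]
    have heq : ((Finset.range (d * q')).filter (fun j => P ((ξ' * j) % q') ∧ (ξ' * j) % q' = r))
        = (Finset.range (d * q')).filter (fun j => (ξ' * j) % q' = r) := by
      apply Finset.filter_congr
      intro j _
      constructor
      · exact fun h => h.2
      · exact fun h => ⟨h ▸ hr.2, h⟩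
    rw [heq]
    exact fiber_card q' d ξ' u hq' hu r hr.1
  rw [Finset.sum_congr rfl hfib, Finset.sum_const, smul_eq_mul, mul_comm]

set_option maxHeartbeats 1000000 in
lemma count_fract_le (Q : ℕ) (hQ : 1 ≤ Q) (γ c : ℝ) (hc0 : 0 < c) (hc1 : c < 1) :
    |(((Finset.range Q).filter (fun r : ℕ => Int.fract ((r:ℝ)/Q + γ) ≤ c)).card : ℝ) - c * Q| ≤ 3 := by
  have hQ0 : (0:ℝ) < Q := by exact_mod_cast hQ
  set γ' := Int.fract γ with hγ'def
  have hγ0 : 0 ≤ γ' := Int.fract_nonneg γ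
  have hγ1 : γ' < 1 := Int.fract_lt_one γ
  -- rewrite γ to γ'
  have hγrw : ∀ r : ℕ, Int.fract ((r:ℝ)/Q + γ) = Int.fract ((r:ℝ)/Q + γ') := by
    intro r
    conv_lhs => rw [show (r:ℝ)/Q + γ = ((r:ℝ)/Q + γ') + (⌊γ⌋ : ℤ) by
      have := Int.fract_add_floor γ; rw [hγ'def]; linarith]
    rw [Int.fract_add_intCast]
  -- pointwise equivalence
  have hiff : ∀ r ∈ Finset.range Q,
      (Int.fract ((r:ℝ)/Q + γ) ≤ c ↔
        ((r:ℝ) ≤ Q*(c - γ') ∨ ((Q:ℝ)*(1 - γ') ≤ r ∧ (r:ℝ) ≤ Q*(1 + c - γ')))) := by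
    intro r hr
    rw [Finset.mem_range] at hr
    have hrQ : (r:ℝ) < Q := by exact_mod_cast hr
    have hrQ' : (r:ℝ)/Q < 1 := by rw [div_lt_one hQ0]; exact hrQ
    have hr0 : (0:ℝ) ≤ (r:ℝ)/Q := by positivity
    rw [hγrw r]
    set t := (r:ℝ)/Q + γ' with ht
    have ht0 : 0 ≤ t := by positivity
    have ht2 : t < 2 := by simp only [ht]; linarith
    rcases lt_or_ge t 1 with h1 | h1
    · have hft : Int.fract t = t := Int.fract_eq_self.mpr ⟨ht0, h1⟩
      rw [hft]
      constructor
      · intro h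
        left
        have : (r:ℝ)/Q ≤ c - γ' := by simp only [ht] at h; linarith
        calc (r:ℝ) = ((r:ℝ)/Q) * Q := by field_simp
          _ ≤ (c - γ') * Q := by nlinarith
          _ = Q * (c - γ') := by ring
      · rintro (h | ⟨h, _⟩)
        · have : (r:ℝ)/Q ≤ c - γ' := by
            rw [div_le_iff₀ hQ0]; linarith [h]
          simp only [ht]; linarith
        · exfalso
          have : (1:ℝ) - γ' ≤ (r:ℝ)/Q := by
            rw [le_div_iff₀ hQ0]; linarith [h]
          simp only [ht] at h1; linarith
    · have hft : Int.fract t = t - 1 := by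
        have : Int.fract (t - 1 + (1:ℤ)) = Int.fract (t-1) := Int.fract_add_intCast _ _
        simp only [Int.cast_one, sub_add_cancel] at this
        rw [this, Int.fract_eq_self.mpr ⟨by linarith, by linarith⟩]
      rw [hft]
      constructor
      · intro h
        right
        constructor
        · have : (1:ℝ) - γ' ≤ (r:ℝ)/Q := by simp only [ht] at h1; linarith
          calc (Q:ℝ)*(1-γ') ≤ Q * ((r:ℝ)/Q) := by nlinarith
            _ = r := by field_simp
        · have : (r:ℝ)/Q ≤ 1 + c - γ' := by simp only [ht] at h; linarith
          calc (r:ℝ) = ((r:ℝ)/Q)*Q := by field_simp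
            _ ≤ (1+c-γ')*Q := by nlinarith
            _ = Q*(1+c-γ') := by ring
      · rintro (h | ⟨_, h⟩)
        · exfalso
          have : (r:ℝ)/Q ≤ c - γ' := by rw [div_le_iff₀ hQ0]; linarith [h]
          simp only [ht] at h1; linarith
        · have : (r:ℝ)/Q ≤ 1 + c - γ' := by rw [div_le_iff₀ hQ0]; linarith [h]
          simp only [ht]; linarith
  rw [Finset.filter_congr hiff, Finset.filter_or,
    Finset.card_union_of_disjoint (by
      rw [Finset.disjoint_left]
      intro r h1 h2
      simp only [Finset.mem_filter] at h1 h2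
      have := h1.2
      have h2' := h2.2.1
      nlinarith [this, h2'])]
  push_cast
  rcases le_or_gt γ' c with hcase | hcase
  · -- γ' ≤ c
    set x := (Q:ℝ)*(c - γ') with hx
    have hx0 : 0 ≤ x := mul_nonneg hQ0.le (by linarith)
    have hxQ : x < Q := by nlinarith
    -- card A
    have hA : ((Finset.range Q).filter (fun r : ℕ => (r:ℝ) ≤ (Q:ℝ)*(c - γ'))).card
        = ⌊x⌋₊ + 1 := by
      have h1 : ((Finset.range Q).filter (fun r : ℕ => (r:ℝ) ≤ (Q:ℝ)*(c - γ')))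
          = Finset.range (⌊x⌋₊ + 1) := by
        ext r
        simp only [Finset.mem_filter, Finset.mem_range]
        rw [← Nat.le_floor_iff hx0]
        have hfl : ⌊x⌋₊ < Q := by
          rw [Nat.floor_lt hx0]; exact_mod_cast hxQ
        omega
      rw [h1, Finset.card_range]
    -- card B
    set a := (Q:ℝ)*(1 - γ') with ha
    have ha0 : 0 ≤ a := mul_nonneg hQ0.le (by linarith)
    have haQ : a ≤ Q := by nlinarith
    have hceil : ⌈a⌉₊ ≤ Q := Nat.ceil_le.mpr (by exact_mod_cast haQ)
    have hB : ((Finset.range Q).filter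
        (fun r : ℕ => (Q:ℝ)*(1 - γ') ≤ r ∧ (r:ℝ) ≤ (Q:ℝ)*(1 + c - γ'))).card
        = Q - ⌈a⌉₊ := by
      have h1 : ((Finset.range Q).filter
          (fun r : ℕ => (Q:ℝ)*(1 - γ') ≤ r ∧ (r:ℝ) ≤ (Q:ℝ)*(1 + c - γ')))
          = Finset.Ico ⌈a⌉₊ Q := by
        ext r
        simp only [Finset.mem_filter, Finset.mem_range, Finset.mem_Ico]
        constructor
        · rintro ⟨h1, h2, _⟩
          exact ⟨Nat.ceil_le.mpr h2, h1⟩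
        · rintro ⟨h1, h2⟩
          refine ⟨h2, Nat.ceil_le.mp h1, ?_⟩
          have : (r:ℝ) < Q := by exact_mod_cast h2
          nlinarith
      rw [h1, Nat.card_Ico]
    rw [hA, hB]
    have hfle := Nat.floor_le hx0
    have hflt := Nat.lt_floor_add_one x
    have hcle := Nat.le_ceil a
    have hclt := Nat.ceil_lt_add_one ha0
    have hkey : x + (Q:ℝ) - a = c * Q := by rw [hx, ha]; ring
    have hsub : ((Q - ⌈a⌉₊ : ℕ) : ℝ) = (Q:ℝ) - (⌈a⌉₊ : ℝ) := by
      push_cast [hceil]; ring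
    rw [abs_le]
    push_cast [hceil]
    constructor
    · linarith
    · linarith
  · -- c < γ'
    set a := (Q:ℝ)*(1 - γ') with ha
    set b := (Q:ℝ)*(1 + c - γ') with hb
    have ha0 : 0 < a := by nlinarith
    have hab : a ≤ b := by nlinarith
    have hb0 : 0 ≤ b := by linarith
    have hbQ : b < Q := by nlinarith
    have hflb : ⌊b⌋₊ < Q := by rw [Nat.floor_lt hb0]; exact_mod_cast hbQ
    -- A empty
    have hA : ((Finset.range Q).filter (fun r : ℕ => (r:ℝ) ≤ (Q:ℝ)*(c - γ'))).card = 0 := by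
      rw [Finset.card_eq_zero]
      apply Finset.filter_false_of_mem
      intro r _
      have : (0:ℝ) ≤ (r:ℝ) := by positivity
      intro hcon
      nlinarith
    have hB : ((Finset.range Q).filter
        (fun r : ℕ => (Q:ℝ)*(1 - γ') ≤ r ∧ (r:ℝ) ≤ (Q:ℝ)*(1 + c - γ'))).card
        = ⌊b⌋₊ + 1 - ⌈a⌉₊ := by
      have h1 : ((Finset.range Q).filter
          (fun r : ℕ => (Q:ℝ)*(1 - γ') ≤ r ∧ (r:ℝ) ≤ (Q:ℝ)*(1 + c - γ')))
          = Finset.Icc ⌈a⌉₊ ⌊b⌋₊ := by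
        ext r
        simp only [Finset.mem_filter, Finset.mem_range, Finset.mem_Icc]
        constructor
        · rintro ⟨_, h2, h3⟩
          exact ⟨Nat.ceil_le.mpr h2, Nat.le_floor h3⟩
        · rintro ⟨h1, h2⟩
          have h3 : (r:ℝ) ≤ b := (Nat.le_floor_iff hb0).mp h2
          exact ⟨by omega, Nat.ceil_le.mp h1, h3⟩
      rw [h1, Nat.card_Icc]
    rw [hA, hB]
    rcases le_or_gt ⌈a⌉₊ ⌊b⌋₊ with hle | hlt
    · have hcast : ((⌊b⌋₊ + 1 - ⌈a⌉₊ : ℕ) : ℝ) = (⌊b⌋₊:ℝ) + 1 - (⌈a⌉₊:ℝ) := by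
        push_cast [Nat.le_succ_of_le hle]
        ring
      rw [hcast]
      have hfle := Nat.floor_le hb0
      have hflt := Nat.lt_floor_add_one b
      have hcle := Nat.le_ceil a
      have hclt := Nat.ceil_lt_add_one ha0.le
      have hkey : b - a = c * Q := by rw [hb, ha]; ring
      rw [abs_le]
      simp only [Nat.cast_zero]
      constructor <;> linarith
    · have h0 : ⌊b⌋₊ + 1 - ⌈a⌉₊ = 0 := by omega
      rw [h0]
      have hba : b - a < 1 := by
        by_contra hcon
        push_neg at hcon
        have h1 : a + 1 ≤ b := by linarith
        have h2 : (⌈a⌉₊ : ℝ) ≤ b := by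
          have := Nat.ceil_lt_add_one ha0.le
          linarith
        have h3 : ⌈a⌉₊ ≤ ⌊b⌋₊ := Nat.le_floor h2
        omega
      have hkey : b - a = c * Q := by rw [hb, ha]; ring
      have hcQ : c * Q < 1 := by linarith
      have hcQ0 : 0 ≤ c * Q := by positivity
      rw [abs_le]
      simp only [Nat.cast_zero]
      constructor <;> linarith


lemma meshT_eq (q : ℕ) (θ : ℝ) :
    meshT q θ = (Finset.range q).image (fun j : ℕ => Int.fract ((j:ℝ)/q + θ/q^2)) := by
  unfold meshT
  ext x
  simp

/-- the number of mesh points of `T_{q,θ}` in the Bohr set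
`B_ξ(κ) = {t ∈ [0,1) : ‖ξt‖ ≤ κ}` is `2κq + O(ξ)`. -/
theorem mesh_bohr_count :
    ∃ C : ℝ, 0 < C ∧
      ∀ (q ξ : ℕ) (θ κ : ℝ),
        1 ≤ q → 1 ≤ ξ → 0 < κ → κ < 1 / 2 →
        |(((meshT q θ).filter (fun t => distInt ((ξ : ℝ) * t) ≤ κ)).card : ℝ)
            - 2 * κ * q| ≤ C * ξ := by
  refine ⟨3, by norm_num, ?_⟩
  intro q ξ θ κ hq hξ hκ0 hκ
  have hq0 : (0:ℝ) < q := by exact_mod_cast hq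
  set d := Nat.gcd ξ q with hd_def
  have hd : 0 < d := Nat.gcd_pos_of_pos_left q hξ
  set q' := q / d with hq'_def
  set ξ' := ξ / d with hξ'_def
  have hqd : d * q' = q := Nat.mul_div_cancel' (Nat.gcd_dvd_right ξ q)
  have hξd : d * ξ' = ξ := Nat.mul_div_cancel' (Nat.gcd_dvd_left ξ q)
  have hq' : 1 ≤ q' := by
    rcases Nat.eq_zero_or_pos q' with h | h
    · exfalso; rw [h, Nat.mul_zero] at hqd; omega
    · exact h
  have hq'0 : (0:ℝ) < q' := by exact_mod_cast hq'
  have hd0 : (0:ℝ) < d := by exact_mod_cast hd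
  have hco : Nat.Coprime ξ' q' := Nat.coprime_div_gcd_div_gcd hd
  set β : ℝ := ξ * θ / q ^ 2 with hβ_def
  set f : ℕ → ℝ := fun j => Int.fract ((j : ℝ) / q + θ / q ^ 2) with hf_def
  -- predicate identity
  have hpf : ∀ j : ℕ, distInt ((ξ:ℝ) * f j) = distInt ((ξ:ℝ) * ((j:ℝ)/q + θ/q^2)) := by
    intro j
    set x := (j:ℝ)/q + θ/q^2 with hx_def
    have hfx : (ξ:ℝ) * x = (ξ:ℝ) * Int.fract x + ((ξ * ⌊x⌋ : ℤ) : ℝ) := by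
      push_cast
      have := Int.fract_add_floor x
      nlinarith [this]
    rw [hfx, distInt_add_int]
  -- step 1 : mesh count = range count
  have hstep1 : ((meshT q θ).filter (fun t => distInt ((ξ : ℝ) * t) ≤ κ)).card
      = ((Finset.range q).filter (fun j : ℕ => distInt ((ξ:ℝ) * ((j:ℝ)/q + θ/q^2)) ≤ κ)).card := by
    symm
    apply Finset.card_bij (fun j _ => f j)
    · intro j hj
      simp only [Finset.mem_filter, Finset.mem_range] at hj
      rw [Finset.mem_filter, meshT_eq]
      constructor
      · exact Finset.mem_image.mpr ⟨j, Finset.mem_range.mpr hj.1, rfl⟩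
      · rw [hpf j]; exact hj.2
    · intro j₁ hj₁ j₂ hj₂ hj
      simp only [Finset.mem_filter, Finset.mem_range] at hj₁ hj₂
      have hj₁q : (j₁:ℝ) < q := by exact_mod_cast hj₁.1
      have hj₂q : (j₂:ℝ) < q := by exact_mod_cast hj₂.1
      obtain ⟨z, hz⟩ := Int.fract_eq_fract.mp hj
      have hz' : (z : ℝ) = ((j₁:ℝ) - j₂) / q := by rw [← hz]; field_simp; ring
      have hzabs : |(z:ℝ)| < 1 := by
        rw [hz', abs_div, abs_of_pos hq0, div_lt_one hq0, abs_sub_lt_iff]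
        constructor
        · nlinarith [Nat.cast_nonneg (α := ℝ) j₂]
        · nlinarith [Nat.cast_nonneg (α := ℝ) j₁]
      have hz0 : z = 0 := Int.abs_lt_one_iff.mp (by exact_mod_cast hzabs)
      rw [hz0] at hz'
      have : (j₁:ℝ) = j₂ := by
        have h2 : ((j₁:ℝ) - j₂) / q = 0 := by rw [← hz']; norm_num
        have h3 : (j₁:ℝ) - j₂ = 0 := by
          field_simp at h2
          simpa using h2
        linarith
      exact_mod_cast this
    · intro t ht
      rw [Finset.mem_filter, meshT_eq] at ht
      obtain ⟨j, hjq, hjt⟩ := Finset.mem_image.mp ht.1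
      refine ⟨j, ?_, hjt⟩
      rw [Finset.mem_filter]
      refine ⟨hjq, ?_⟩
      rw [← hpf j]
      show distInt ((ξ:ℝ) * f j) ≤ κ
      rw [show f j = t from hjt]
      exact ht.2
  -- step 2 : rewrite the predicate via residues
  set P : ℕ → Prop := fun r => distInt ((r:ℝ)/q' + β) ≤ κ with hP_def
  have hpred : ∀ j : ℕ, distInt ((ξ:ℝ) * ((j:ℝ)/q + θ/q^2)) = distInt ((((ξ' * j) % q' : ℕ):ℝ)/q' + β) := by
    intro j
    set m : ℕ := (ξ' * j) % q' with hm_def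
    set v : ℕ := (ξ' * j) / q' with hv_def
    have e1 : (ξ:ℝ) * ((j:ℝ)/q + θ/q^2) = (ξ:ℝ)*j/q + β := by
      rw [hβ_def]; field_simp
    have e2 : (ξ:ℝ)*j/q = (ξ':ℝ)*j/q' := by
      have hdq : (q:ℝ) = (d:ℝ) * q' := by exact_mod_cast hqd.symm
      have hdξ : (ξ:ℝ) = (d:ℝ) * ξ' := by exact_mod_cast hξd.symm
      rw [hdq, hdξ]
      field_simp
    have e3 : (ξ':ℝ) * j = (m:ℝ) + (v:ℝ) * q' := by
      have : m + v * q' = ξ' * j := Nat.mod_add_div' (ξ' * j) q'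
      exact_mod_cast this.symm
    have e4 : (ξ':ℝ)*j/q' = (m:ℝ)/q' + (v:ℝ) := by
      rw [e3]
      field_simp
    rw [e1, e2, e4]
    have e5 : (m:ℝ)/q' + (v:ℝ) + β = ((m:ℝ)/q' + β) + ((v:ℤ):ℝ) := by
      push_cast
      ring
    rw [e5, distInt_add_int]
  have hstep2 : ((Finset.range q).filter (fun j : ℕ => distInt ((ξ:ℝ) * ((j:ℝ)/q + θ/q^2)) ≤ κ)).card
      = ((Finset.range (d * q')).filter (fun j => P ((ξ' * j) % q'))).card := by
    have h1 : ((Finset.range q).filter (fun j : ℕ => distInt ((ξ:ℝ) * ((j:ℝ)/q + θ/q^2)) ≤ κ))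
        = ((Finset.range q).filter (fun j => P ((ξ' * j) % q'))) := by
      apply Finset.filter_congr
      intro j _
      rw [hP_def]
      exact iff_of_eq (congrArg (· ≤ κ) (hpred j))
    rw [h1, hqd]
  -- step 3-4
  have hstep3 := count_rescale q' d ξ' hq' hco P
  have hfilter4 : ((Finset.range q').filter P)
      = ((Finset.range q').filter (fun r : ℕ => Int.fract ((r:ℝ)/q' + (β + κ)) ≤ 2*κ)) := by
    apply Finset.filter_congr
    intro r _
    rw [hP_def]
    have := distInt_le_iff_fract ((r:ℝ)/q' + β) κ hκ0 hκ
    rw [add_assoc] at this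
    exact this
  have hstep4 := count_fract_le q' hq' (β + κ) (2*κ) (by linarith) (by linarith)
  rw [← hfilter4] at hstep4
  -- final assembly
  have hdξ' : (d:ℝ) ≤ (ξ:ℝ) := by
    exact_mod_cast Nat.le_of_dvd hξ (Nat.gcd_dvd_left ξ q)
  have hξ0 : (0:ℝ) < ξ := by exact_mod_cast hξ
  rw [hstep1, hstep2, hstep3]
  have hqreal : (q:ℝ) = (d:ℝ) * q' := by exact_mod_cast hqd.symm
  set c' := (((Finset.range q').filter P).card : ℝ) with hc'_def
  have hcast : ((d * ((Finset.range q').filter P).card : ℕ):ℝ) = (d:ℝ) * c' := by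
    push_cast
    rfl
  rw [hcast, hqreal]
  have habs : |(d:ℝ) * c' - 2*κ*((d:ℝ)*q')| = (d:ℝ) * |c' - 2*κ*q'| := by
    rw [show (d:ℝ) * c' - 2*κ*((d:ℝ)*q') = (d:ℝ) * (c' - 2*κ*q') by ring,
      abs_mul, abs_of_pos hd0]
  rw [habs]
  have h2κq' : |c' - 2*κ*q'| ≤ 3 := by
    have : 2*κ*(q':ℝ) = 2*κ*q' := rfl
    calc |c' - 2*κ*q'| = |c' - (2*κ)*q'| := by ring_nf
      _ ≤ 3 := hstep4
  calc (d:ℝ) * |c' - 2*κ*q'| ≤ (d:ℝ) * 3 := by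
        apply mul_le_mul_of_nonneg_left h2κq' hd0.le
    _ ≤ 3 * ξ := by linarith
end
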